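/- Two maximal tubings J and K of the cycle graph C_n are equal if and only if their inversion sets are equal: inv(J) = inv(K). -/

import Mathlib

open Finset

section TubingDefs

variable {n : ℕ}

/-- A tube of a graph: a nonempty vertex subset inducing a connected subgraph. -/
def IsTube (G : SimpleGraph (Fin n)) (X : Finset (Fin n)) : Prop :=
  X.Nonempty ∧ (G.induce (X : Set (Fin n))).Connected

/-- Tubes are compatible if nested or with disconnected union. -/
def TubeCompatible (G : SimpleGraph (Fin n)) (X Y : Finset (Fin n)) : Prop :=
  X ⊆ Y ∨ Y ⊆ X ∨ ¬ IsTube G (X ∪ Y)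

def IsTubing (G : SimpleGraph (Fin n)) (T : Finset (Finset (Fin n))) : Prop :=
  (∀ X ∈ T, IsTube G X) ∧ ∀ X ∈ T, ∀ Y ∈ T, TubeCompatible G X Y

def IsMaxTubing (G : SimpleGraph (Fin n)) (T : Finset (Finset (Fin n))) : Prop :=
  IsTubing G T ∧ ∀ T', IsTubing G T' → T ⊆ T' → T' = T

/-- The smallest tube of `T` containing `x`: the intersection of all tubes of `T`
containing `x`. -/
def tubingDown (T : Finset (Finset (Fin n))) (x : Fin n) : Finset (Fin n) :=
  Finset.univ.filter (fun y => ∀ X ∈ T, x ∈ X → y ∈ X)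

/-- The G-tree order of a tubing: `x ≤_T y` iff `x` lies in the smallest tube containing `y`. -/
def treeLE (T : Finset (Finset (Fin n))) (x y : Fin n) : Prop :=
  x ∈ tubingDown T y

/-- `y` covers `x` in the G-tree order of `T`. -/
def TreeCovBy (T : Finset (Finset (Fin n))) (x y : Fin n) : Prop :=
  treeLE T x y ∧ x ≠ y ∧ ∀ z, treeLE T x z → treeLE T z y → z = x ∨ z = y

/-- Flip cover relation on maximal tubings: exchange exactly one tube, with the
top (least-nested) element of the exchanged tube increasing. -/
def FlipCover (G : SimpleGraph (Fin n)) (T J : Finset (Finset (Fin n))) : Prop :=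
  IsMaxTubing G T ∧ IsMaxTubing G J ∧
  ∃ X Y, X ∈ T ∧ Y ∈ J ∧ X ≠ Y ∧ T.erase X = J.erase Y ∧
    ∃ x y : Fin n, tubingDown T x = X ∧ tubingDown J y = Y ∧ x < y

/-- The order of the poset of maximal tubings, generated by flip covers. -/
def MTubLE (G : SimpleGraph (Fin n)) :
    Finset (Finset (Fin n)) → Finset (Finset (Fin n)) → Prop :=
  Relation.ReflTransGen (FlipCover G)

/-- Inversions: pairs `i < j` with `j <_T i` in the G-tree. -/
def invSet (T : Finset (Finset (Fin n))) : Set (Fin n × Fin n) :=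
  {p | p.1 < p.2 ∧ treeLE T p.2 p.1}

/-- Coinversions: pairs `i < j` with `i <_T j` in the G-tree. -/
def coinvSet (T : Finset (Finset (Fin n))) : Set (Fin n × Fin n) :=
  {p | p.1 < p.2 ∧ treeLE T p.1 p.2}

/-- Incomparable pairs `i < j` of the G-tree. -/
def incSet (T : Finset (Finset (Fin n))) : Set (Fin n × Fin n) :=
  {p | p.1 < p.2 ∧ ¬ treeLE T p.1 p.2 ∧ ¬ treeLE T p.2 p.1}

/-- The cut of the tube `J↓(x)`, where `m` is the root of the G-tree of `J`. -/
def cutTube (J : Finset (Finset (Fin n))) (m x : Fin n) : Finset (Fin n) :=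
  if x = m then tubingDown J x
  else if x < m then (tubingDown J x).filter (fun y => y < m)
  else (tubingDown J x).filter (fun y => m < y)

/-- The Cut map on maximal tubings of the cycle. -/
def CutTubing (J : Finset (Finset (Fin n))) (m : Fin n) : Finset (Finset (Fin n)) :=
  Finset.image (cutTube J m) Finset.univ

/-- Inversions of a word: pairs `i < j` such that `j` appears before `i`. -/
def listInvSet (w : List (Fin n)) : Set (Fin n × Fin n) :=
  {p | p.1 < p.2 ∧ p.1 ∈ w ∧ p.2 ∈ w ∧ w.idxOf p.2 < w.idxOf p.1}

end TubingDefs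

/-- The path graph `1 - 2 - ⋯ - n`. -/
def pathGraph (n : ℕ) : SimpleGraph (Fin n) :=
  SimpleGraph.fromRel (fun a b => (a : ℕ) + 1 = (b : ℕ))

/-- The cycle graph `1 - 2 - ⋯ - n - 1`. -/
def cycleGraph (n : ℕ) : SimpleGraph (Fin n) :=
  SimpleGraph.fromRel (fun a b => (a : ℕ) + 1 = (b : ℕ) ∨ ((a : ℕ) = 0 ∧ (b : ℕ) = n - 1))
section Proofs

variable {n : ℕ}

lemma fin_val_add_one [NeZero n] {a : Fin n} (h : a.val + 1 < n) : (a + 1).val = a.val + 1 := by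
  have h2 : 2 ≤ n := by have := a.isLt; omega
  have h1 : (1 : Fin n).val = 1 := by rw [Fin.val_one']; exact Nat.mod_eq_of_lt h2
  have hv : (a + 1).val = (a.val + (1 : Fin n).val) % n := Fin.val_add a 1
  rw [h1] at hv
  rw [hv]
  exact Nat.mod_eq_of_lt h

lemma fin_val_wrap [NeZero n] {a : Fin n} (h : a.val + 1 = n) : (a + 1).val = 0 := by
  have h1 : (1 : Fin n).val = 1 % n := Fin.val_one' n
  have hv : (a + 1).val = (a.val + (1 : Fin n).val) % n := Fin.val_add a 1
  rw [h1] at hv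
  rcases Nat.lt_or_ge 1 n with h2 | h2
  · rw [Nat.mod_eq_of_lt h2] at hv
    rw [hv, h, Nat.mod_self]
  · have hn : n = 1 := by have := NeZero.pos n; omega
    subst hn
    simp at hv; omega

lemma cycle_adj [NeZero n] {a b : Fin n} :
    (cycleGraph n).Adj a b ↔ a ≠ b ∧ (b = a + 1 ∨ a = b + 1) := by
  have hn : 0 < n := a.pos
  constructor
  · rintro ⟨hne, h | h⟩
    · refine ⟨hne, ?_⟩
      rcases h with h | ⟨h0, h1⟩
      · left; apply Fin.ext
        have hb := b.isLt
        rw [fin_val_add_one (by omega)]; omega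
      · right; apply Fin.ext
        have hb := b.isLt
        rw [fin_val_wrap (by omega)]; omega
    · refine ⟨hne, ?_⟩
      rcases h with h | ⟨h0, h1⟩
      · right; apply Fin.ext
        have ha := a.isLt
        rw [fin_val_add_one (by omega)]; omega
      · left; apply Fin.ext
        have ha := a.isLt
        rw [fin_val_wrap (by omega)]; omega
  · rintro ⟨hne, h | h⟩
    · refine ⟨hne, ?_⟩
      by_cases hlt : a.val + 1 < n
      · left; left; rw [h, fin_val_add_one hlt]
      · have ha := a.isLt
        have hw : (a + 1).val = 0 := fin_val_wrap (by omega)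
        right; right
        rw [h]
        exact ⟨hw, by omega⟩
    · refine ⟨hne, ?_⟩
      by_cases hlt : b.val + 1 < n
      · right; left; rw [h, fin_val_add_one hlt]
      · have hb := b.isLt
        have hw : (b + 1).val = 0 := fin_val_wrap (by omega)
        left; right
        rw [h]
        exact ⟨hw, by omega⟩

lemma cycle_adj_succ [NeZero n] (hn : 2 ≤ n) (a : Fin n) : (cycleGraph n).Adj a (a + 1) := by
  refine cycle_adj.mpr ⟨?_, Or.inl rfl⟩
  intro h
  by_cases hlt : a.val + 1 < n
  · have := fin_val_add_one hlt
    rw [← h] at this; omega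
  · have ha := a.isLt
    have := fin_val_wrap (a := a) (by omega)
    rw [← h] at this; omega

end Proofs
section PartB
open Finset

variable {n : ℕ} {G : SimpleGraph (Fin n)}

/-- Hom between induced subgraphs along a subset inclusion. -/
def inclHom (G : SimpleGraph (Fin n)) {s t : Set (Fin n)} (h : s ⊆ t) :
    G.induce s →g G.induce t where
  toFun := fun x => ⟨x.1, h x.2⟩
  map_rel' := by
    intro a b hab
    simp only [SimpleGraph.comap_adj] at hab ⊢
    exact hab

lemma reach_lift {s t : Set (Fin n)} (h : s ⊆ t) {u v : Fin n} (hu : u ∈ s) (hv : v ∈ s)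
    (hr : (G.induce s).Reachable ⟨u, hu⟩ ⟨v, hv⟩) :
    (G.induce t).Reachable ⟨u, h hu⟩ ⟨v, h hv⟩ :=
  hr.map (inclHom G h)

lemma induce_adj_of_adj {s : Set (Fin n)} {u v : Fin n} (hu : u ∈ s) (hv : v ∈ s)
    (h : G.Adj u v) : (G.induce s).Adj ⟨u, hu⟩ ⟨v, hv⟩ := by
  simp only [SimpleGraph.comap_adj]
  exact h

lemma tube_union {X Y : Finset (Fin n)} (hX : IsTube G X) (hY : IsTube G Y)
    (h : (∃ c, c ∈ X ∧ c ∈ Y) ∨ ∃ a ∈ X, ∃ b ∈ Y, G.Adj a b) : IsTube G (X ∪ Y) := by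
  obtain ⟨hXne, hXc⟩ := hX
  obtain ⟨hYne, hYc⟩ := hY
  constructor
  · exact hXne.mono Finset.subset_union_left
  · have hXsub : (X : Set (Fin n)) ⊆ ((X ∪ Y : Finset (Fin n)) : Set (Fin n)) := by
      intro z hz; simp only [Finset.coe_union, Set.mem_union]; exact Or.inl hz
    have hYsub : (Y : Set (Fin n)) ⊆ ((X ∪ Y : Finset (Fin n)) : Set (Fin n)) := by
      intro z hz; simp only [Finset.coe_union, Set.mem_union]; exact Or.inr hz
    -- every vertex of X ∪ Y reaches a designated vertex
    have key : ∀ (a : Fin n) (ha : a ∈ X) (b : Fin n) (hb : b ∈ Y),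
        ((∃ c, c ∈ X ∧ c ∈ Y) ∨ ∃ a ∈ X, ∃ b ∈ Y, G.Adj a b) →
        (G.induce ((X ∪ Y : Finset (Fin n)) : Set (Fin n))).Reachable
          ⟨a, hXsub ha⟩ ⟨b, hYsub hb⟩ := by
      intro a ha b hb hcase
      rcases hcase with ⟨c, hcX, hcY⟩ | ⟨a', ha', b', hb', hadj⟩
      · have r1 := reach_lift hXsub ha hcX (hXc.preconnected _ _)
        have r2 := reach_lift hYsub hcY hb (hYc.preconnected _ _)
        exact r1.trans r2
      · have r1 := reach_lift hXsub ha ha' (hXc.preconnected _ _)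
        have r2 := reach_lift hYsub hb' hb (hYc.preconnected _ _)
        have e : (G.induce ((X ∪ Y : Finset (Fin n)) : Set (Fin n))).Adj
            ⟨a', hXsub ha'⟩ ⟨b', hYsub hb'⟩ := induce_adj_of_adj _ _ hadj
        exact (r1.trans e.reachable).trans r2
    obtain ⟨b0, hb0⟩ := hYne
    obtain ⟨a0, ha0⟩ := hXne
    rw [SimpleGraph.connected_iff]
    refine ⟨?_, ⟨⟨a0, hXsub ha0⟩⟩⟩
    rintro ⟨u, hu⟩ ⟨v, hv⟩
    have hu' : u ∈ X ∪ Y := hu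
    have hv' : v ∈ X ∪ Y := hv
    rw [Finset.mem_union] at hu' hv'
    rcases hu' with hu' | hu' <;> rcases hv' with hv' | hv'
    · exact reach_lift hXsub hu' hv' (hXc.preconnected _ _)
    · exact key u hu' v hv' h
    · exact (key v hv' u hu' h).symm
    · exact reach_lift hYsub hu' hv' (hYc.preconnected _ _)

lemma compat_symm {X Y : Finset (Fin n)} (h : TubeCompatible G X Y) : TubeCompatible G Y X := by
  rcases h with h | h | h
  · exact Or.inr (Or.inl h)
  · exact Or.inl h
  · exact Or.inr (Or.inr (by rwa [Finset.union_comm]))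

lemma tube_chain {J : Finset (Finset (Fin n))} (hJ : IsTubing G J)
    {X Y : Finset (Fin n)} (hX : X ∈ J) (hY : Y ∈ J) {c : Fin n}
    (hcX : c ∈ X) (hcY : c ∈ Y) : X ⊆ Y ∨ Y ⊆ X := by
  rcases hJ.2 X hX Y hY with h | h | h
  · exact Or.inl h
  · exact Or.inr h
  · exact absurd (tube_union (hJ.1 X hX) (hJ.1 Y hY) (Or.inl ⟨c, hcX, hcY⟩)) h

lemma mem_tubingDown {T : Finset (Finset (Fin n))} {x y : Fin n} :
    y ∈ tubingDown T x ↔ ∀ X ∈ T, x ∈ X → y ∈ X := by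
  simp [tubingDown]

lemma treeLE_def {T : Finset (Finset (Fin n))} {x y : Fin n} :
    treeLE T x y ↔ ∀ X ∈ T, y ∈ X → x ∈ X := by
  rw [treeLE, mem_tubingDown]

lemma treeLE_refl (T : Finset (Finset (Fin n))) (x : Fin n) : treeLE T x x :=
  treeLE_def.mpr (fun _ _ h => h)

lemma tubingDown_subset {T : Finset (Finset (Fin n))} {x : Fin n} {X : Finset (Fin n)}
    (hX : X ∈ T) (hx : x ∈ X) : tubingDown T x ⊆ X :=
  fun _ hy => (mem_tubingDown.mp hy) X hX hx

lemma tubingDown_eq_of_le_le {T : Finset (Finset (Fin n))} {x y : Fin n}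
    (h1 : treeLE T x y) (h2 : treeLE T y x) : tubingDown T x = tubingDown T y := by
  rw [treeLE_def] at h1 h2
  ext z
  rw [mem_tubingDown, mem_tubingDown]
  constructor
  · intro h X hX hy
    exact h X hX (h1 X hX hy)
  · intro h X hX hx
    exact h X hX (h2 X hX hx)

end PartB
section PartC
open Finset

variable {n : ℕ} {G : SimpleGraph (Fin n)}

lemma fin_sub_one_eq [NeZero n] {t : Fin n} (h : 1 ≤ t.val) :
    t - 1 = ⟨t.val - 1, by omega⟩ := by
  have ht := t.isLt
  have he : (⟨t.val - 1, by omega⟩ : Fin n) + 1 = t := by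
    apply Fin.ext
    rw [fin_val_add_one (by simp; omega)]
    simp; omega
  have h2 : (⟨t.val - 1, by omega⟩ : Fin n) + 1 - 1 = t - 1 := by rw [he]
  rw [add_sub_cancel_right] at h2
  exact h2.symm

lemma arc_conn [NeZero n] (hn : 2 ≤ n) (m : Fin n) {a b : ℕ} (hab : a < b) (hbn : b ≤ n)
    (S : Finset (Fin n)) (hS : ∀ z, z ∈ S ↔ a ≤ (z - m).val ∧ (z - m).val < b) :
    IsTube (cycleGraph n) S := by
  have han : a < n := by omega
  set e : Fin n := m + ⟨a, han⟩ with he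
  have hpos_e : (e - m).val = a := by rw [he, add_comm, add_sub_cancel_right]
  have heS : e ∈ S := (hS e).mpr ⟨le_of_eq hpos_e.symm, by omega⟩
  have base : ∀ k, ∀ z, (hz : z ∈ S) → (z - m).val = a + k →
      ((cycleGraph n).induce (S : Set (Fin n))).Reachable ⟨e, heS⟩ ⟨z, hz⟩ := by
    intro k
    induction k with
    | zero =>
      intro z hz hzv
      have : z = e := by
        have h1 : z - m = ⟨a, han⟩ := Fin.ext (by simpa using hzv)
        have h2 : z - m + m = z := sub_add_cancel z m
        rw [h1] at h2
        rw [← h2, he, add_comm]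
      subst this
      rfl
    | succ k ih =>
      intro z hz hzv
      have hzb : (z - m).val < b := ((hS z).mp hz).2
      set w : Fin n := z - 1 with hw
      have hzpos : 1 ≤ (z - m).val := by omega
      have hwm : w - m = (z - m) - 1 := by rw [hw, sub_sub, add_comm, ← sub_sub]
      have hwv : (w - m).val = a + k := by
        rw [hwm, fin_sub_one_eq hzpos]; simp; omega
      have hwS : w ∈ S := (hS w).mpr ⟨by omega, by omega⟩
      have hwz : w + 1 = z := sub_add_cancel z 1
      have hadj : (cycleGraph n).Adj w z := by
        rw [← hwz]; exact cycle_adj_succ hn w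
      exact (ih w hwS hwv).trans
        (SimpleGraph.Adj.reachable (induce_adj_of_adj hwS hz hadj))
  constructor
  · exact ⟨e, heS⟩
  · rw [SimpleGraph.connected_iff]
    refine ⟨?_, ⟨⟨e, heS⟩⟩⟩
    rintro ⟨u, hu⟩ ⟨v, hv⟩
    have hu' : u ∈ S := hu
    have hv' : v ∈ S := hv
    have r1 := base ((u - m).val - a) u hu' (by have := ((hS u).mp hu').1; omega)
    have r2 := base ((v - m).val - a) v hv' (by have := ((hS v).mp hv').1; omega)
    exact r1.symm.trans r2

lemma tube_univ (hn : 0 < n) : IsTube (cycleGraph n) (univ : Finset (Fin n)) := by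
  haveI : NeZero n := ⟨by omega⟩
  rcases Nat.lt_or_ge n 2 with h2 | h2
  · have hn1 : n = 1 := by omega
    subst hn1
    refine ⟨⟨0, mem_univ 0⟩, ?_⟩
    rw [SimpleGraph.connected_iff]
    refine ⟨?_, ⟨⟨0, by simp⟩⟩⟩
    intro u v
    have : u = v := Subsingleton.elim u v
    rw [this]
  · exact arc_conn h2 0 (by omega : (0:ℕ) < n) le_rfl univ (fun z => by simp [Fin.isLt])

lemma univ_mem (hn : 0 < n) {J : Finset (Finset (Fin n))}
    (hJ : IsMaxTubing (cycleGraph n) J) : (univ : Finset (Fin n)) ∈ J := by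
  have htub : IsTubing (cycleGraph n) (insert univ J) := by
    constructor
    · intro X hX
      rcases Finset.mem_insert.mp hX with rfl | hX
      · exact tube_univ hn
      · exact hJ.1.1 X hX
    · intro X hX Y hY
      rcases Finset.mem_insert.mp hX with rfl | hX <;>
        rcases Finset.mem_insert.mp hY with rfl | hY
      · exact Or.inl subset_rfl
      · exact Or.inr (Or.inl (subset_univ Y))
      · exact Or.inl (subset_univ X)
      · exact hJ.1.2 X hX Y hY
  have := hJ.2 _ htub (Finset.subset_insert _ _)
  rw [← this]
  exact Finset.mem_insert_self _ _

lemma tubingDown_spec (hn : 0 < n) {J : Finset (Finset (Fin n))}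
    (hJ : IsMaxTubing (cycleGraph n) J) (x : Fin n) :
    tubingDown J x ∈ J ∧ x ∈ tubingDown J x := by
  set S : Finset (Finset (Fin n)) := J.filter (fun Z => x ∈ Z) with hSdef
  have hmemS : ∀ Z, Z ∈ S ↔ Z ∈ J ∧ x ∈ Z := by
    intro Z; rw [hSdef, Finset.mem_filter]
  have hSne : S.Nonempty := ⟨univ, (hmemS univ).mpr ⟨univ_mem hn hJ, mem_univ x⟩⟩
  obtain ⟨M, hMS, hMmin0⟩ := Finset.exists_minimal hSne
  have hMmin : ∀ Z ∈ S, ¬ Z < M := fun Z hZ hlt => hlt.not_ge (hMmin0 hZ hlt.le)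
  obtain ⟨hMJ, hxM⟩ := (hmemS M).mp hMS
  have hleast : ∀ Z ∈ S, M ⊆ Z := by
    intro Z hZS
    obtain ⟨hZJ, hxZ⟩ := (hmemS Z).mp hZS
    rcases tube_chain hJ.1 hZJ hMJ hxZ hxM with h | h
    · by_cases hZM : Z = M
      · exact le_of_eq hZM.symm
      · exact absurd (Finset.ssubset_iff_subset_ne.mpr ⟨h, hZM⟩) (hMmin Z hZS)
    · exact h
  have heq : tubingDown J x = M := by
    apply Finset.Subset.antisymm
    · exact tubingDown_subset hMJ hxM
    · intro y hy
      rw [mem_tubingDown]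
      intro Z hZJ hxZ
      exact hleast Z ((hmemS Z).mpr ⟨hZJ, hxZ⟩) hy
  rw [heq]
  exact ⟨hMJ, hxM⟩

lemma exists_top {J : Finset (Finset (Fin n))} (hJ : IsTubing G J)
    {X : Finset (Fin n)} (hX : X ∈ J) : ∃ x ∈ X, tubingDown J x = X := by
  by_contra hcon
  push_neg at hcon
  have hsub : ∀ x ∈ X, ∃ Z ∈ J, x ∈ Z ∧ Z ⊂ X := by
    intro x hx
    by_contra hno
    push_neg at hno
    refine hcon x hx ?_
    apply Finset.Subset.antisymm (tubingDown_subset hX hx)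
    intro y hy
    rw [mem_tubingDown]
    intro Z hZJ hxZ
    rcases tube_chain hJ hX hZJ hx hxZ with h | h
    · exact h hy
    · have hzx : Z = X := by
        by_cases hZX : Z = X
        · exact hZX
        · exact absurd (Finset.ssubset_iff_subset_ne.mpr ⟨h, hZX⟩) (hno Z hZJ hxZ)
      rw [hzx]; exact hy
  set S : Finset (Finset (Fin n)) := J.filter (fun Z => Z ⊂ X) with hSdef
  have hmemS : ∀ Z, Z ∈ S ↔ Z ∈ J ∧ Z ⊂ X := fun Z => by
    rw [hSdef, Finset.mem_filter]
  have maxAbove : ∀ Z ∈ S, ∃ M, (M ∈ S ∧ ∀ W ∈ S, M ⊆ W → W = M) ∧ Z ⊆ M := by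
    intro Z hZS
    set S' : Finset (Finset (Fin n)) := S.filter (fun W => Z ⊆ W) with hS'def
    have hmemS' : ∀ W, W ∈ S' ↔ W ∈ S ∧ Z ⊆ W := fun W => by
      rw [hS'def, Finset.mem_filter]
    obtain ⟨M, hMS', hMmax0⟩ := Finset.exists_maximal ⟨Z, (hmemS' Z).mpr ⟨hZS, subset_rfl⟩⟩
    have hMmax : ∀ W ∈ S', ¬ M < W := fun W hW hlt => hlt.not_ge (hMmax0 hW hlt.le)
    obtain ⟨hMS, hZM⟩ := (hmemS' M).mp hMS'
    refine ⟨M, ⟨hMS, ?_⟩, hZM⟩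
    intro W hWS hMW
    by_contra hne
    exact hMmax W ((hmemS' W).mpr ⟨hWS, hZM.trans hMW⟩)
      (Finset.ssubset_iff_subset_ne.mpr ⟨hMW, fun h => hne h.symm⟩)
  have part_eq : ∀ M M', (M ∈ S ∧ ∀ W ∈ S, M ⊆ W → W = M) →
      (M' ∈ S ∧ ∀ W ∈ S, M' ⊆ W → W = M') →
      ∀ u v, u ∈ M → v ∈ M' → (u = v ∨ G.Adj u v) → M = M' := by
    rintro M M' ⟨hMS, hMmax⟩ ⟨hM'S, hM'max⟩ u v hu hv huv
    by_contra hne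
    have hMJ := ((hmemS M).mp hMS).1
    have hM'J := ((hmemS M').mp hM'S).1
    rcases hJ.2 M hMJ M' hM'J with h | h | h
    · exact hne (hMmax M' hM'S h).symm
    · exact hne (hM'max M hMS h)
    · refine h (tube_union (hJ.1 M hMJ) (hJ.1 M' hM'J) ?_)
      rcases huv with rfl | hadj
      · exact Or.inl ⟨u, hu, hv⟩
      · exact Or.inr ⟨u, hu, v, hv, hadj⟩
  obtain ⟨a₀, ha₀⟩ := (hJ.1 X hX).1
  obtain ⟨Z₀, hZ₀J, ha₀Z₀, hZ₀X⟩ := hsub a₀ ha₀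
  obtain ⟨M₀, hM₀max, hZ₀M₀⟩ := maxAbove Z₀ ((hmemS Z₀).mpr ⟨hZ₀J, hZ₀X⟩)
  have walkind : ∀ (u v : ((X : Set (Fin n)))) (w : (G.induce (X : Set (Fin n))).Walk u v),
      ↑u ∈ M₀ → ↑v ∈ M₀ := by
    intro u v w
    induction w with
    | nil => exact id
    | @cons p q r h w ih =>
      intro hp
      have hadj : G.Adj ↑p ↑q := by
        simpa [SimpleGraph.comap_adj] using h
      obtain ⟨Zq, hZqJ, hqZq, hZqX⟩ := hsub ↑q q.2
      obtain ⟨Mq, hMqmax, hZqMq⟩ := maxAbove Zq ((hmemS Zq).mpr ⟨hZqJ, hZqX⟩)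
      have : M₀ = Mq := part_eq M₀ Mq hM₀max hMqmax ↑p ↑q hp (hZqMq hqZq) (Or.inr hadj)
      exact ih (this ▸ hZqMq hqZq)
  have hXM₀ : X ⊆ M₀ := by
    intro b hb
    have hreach := (hJ.1 X hX).2.preconnected ⟨a₀, ha₀⟩ ⟨b, hb⟩
    exact hreach.elim (fun w => walkind _ _ w (hZ₀M₀ ha₀Z₀))
  have hM₀X : M₀ ⊂ X := ((hmemS M₀).mp hM₀max.1).2
  exact hM₀X.ne (Finset.Subset.antisymm hM₀X.subset hXM₀)

end PartC
section PartD
open Finset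

variable {n : ℕ}

lemma pos_inj [NeZero n] {m x y : Fin n} (h : (x - m).val = (y - m).val) : x = y := by
  have h1 : x - m = y - m := Fin.ext h
  have h2 := congrArg (· + m) h1
  simpa [sub_add_cancel] using h2

lemma pos_zero [NeZero n] (m : Fin n) : (m - m).val = 0 := by rw [sub_self]; rfl

lemma pos_ne_zero [NeZero n] {m z : Fin n} (h : z ≠ m) : (z - m).val ≠ 0 := by
  intro h0
  exact h (pos_inj (m := m) (by rw [pos_zero]; exact h0))

lemma adj_pos_step [NeZero n] {m p q : Fin n} (hp : p ≠ m) (hq : q ≠ m)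
    (h : (cycleGraph n).Adj p q) :
    (q - m).val = (p - m).val + 1 ∨ (p - m).val = (q - m).val + 1 := by
  have key : ∀ a b : Fin n, a ≠ m → b ≠ m → b = a + 1 → (b - m).val = (a - m).val + 1 := by
    intro a b ha hb hab
    have hba : b - m = (a - m) + 1 := by rw [hab, add_sub_right_comm]
    by_cases hlt : (a - m).val + 1 < n
    · rw [hba, fin_val_add_one hlt]
    · have h1 := (a - m).isLt
      have hw : ((a - m) + 1).val = 0 := fin_val_wrap (by omega)
      rw [← hba] at hw
      exact absurd (pos_ne_zero hb) (by simp [hw])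
  rcases (cycle_adj.mp h).2 with h1 | h1
  · exact Or.inl (key p q hp hq h1)
  · exact Or.inr (key q p hq hp h1)

lemma walk_ivt [NeZero n] {Z : Finset (Fin n)} (hm : ∀ z ∈ Z, z ≠ m) {k : ℕ}
    (u v : ((Z : Set (Fin n)))) (w : ((cycleGraph n).induce (Z : Set (Fin n))).Walk u v)
 :
    ((u : Fin n) - m).val ≤ k → k ≤ ((v : Fin n) - m).val →
    ∃ z ∈ Z, (z - m).val = k := by
  induction w with
  | @nil a => exact fun h1 h2 => ⟨a, a.2, by omega⟩
  | @cons p q r h w ih =>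
    intro h1 h2
    by_cases hk : ((p : Fin n) - m).val = k
    · exact ⟨p, p.2, hk⟩
    · have hadj : (cycleGraph n).Adj ↑p ↑q := by
        simpa [SimpleGraph.comap_adj] using h
      have hstep := adj_pos_step (hm _ p.2) (hm _ q.2) hadj
      exact ih (by omega) h2

lemma tube_convex [NeZero n] {Z : Finset (Fin n)} (hZ : IsTube (cycleGraph n) Z)
    (m : Fin n) (hm : ∀ z ∈ Z, z ≠ m) {a b : Fin n} (ha : a ∈ Z) (hb : b ∈ Z)
    {k : ℕ} (h1 : (a - m).val ≤ k) (h2 : k ≤ (b - m).val) : ∃ z ∈ Z, (z - m).val = k := by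
  have hreach := hZ.2.preconnected ⟨a, ha⟩ ⟨b, hb⟩
  exact hreach.elim (fun w => walk_ivt hm _ _ w h1 h2)

end PartD
section PartE
open Finset

variable {n : ℕ} {G : SimpleGraph (Fin n)}

lemma insert_tube_mem {J : Finset (Finset (Fin n))} (hJ : IsMaxTubing G J)
    {W : Finset (Fin n)} (hW : IsTube G W)
    (hcompat : ∀ Z ∈ J, TubeCompatible G W Z) : W ∈ J := by
  have htub : IsTubing G (insert W J) := by
    constructor
    · intro X hX
      rcases Finset.mem_insert.mp hX with rfl | hX
      · exact hW
      · exact hJ.1.1 X hX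
    · intro X hX Y hY
      rcases Finset.mem_insert.mp hX with hXW | hX
      · rcases Finset.mem_insert.mp hY with hYW | hY
        · rw [hXW, hYW]; exact Or.inl subset_rfl
        · rw [hXW]; exact hcompat Y hY
      · rcases Finset.mem_insert.mp hY with hYW | hY
        · rw [hYW]; exact compat_symm (hcompat X hX)
        · exact hJ.1.2 X hX Y hY
  have := hJ.2 _ htub (Finset.subset_insert _ _)
  rw [← this]
  exact Finset.mem_insert_self _ _

lemma root_only (hn : 0 < n) {J : Finset (Finset (Fin n))}
    (hJ : IsMaxTubing (cycleGraph n) J) {m : Fin n}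
    (hm : tubingDown J m = (univ : Finset (Fin n)))
    {Z : Finset (Fin n)} (hZ : Z ∈ J) (hmZ : m ∈ Z) : Z = univ := by
  have := tubingDown_subset hZ hmZ
  rw [hm] at this
  exact Finset.eq_univ_of_forall (fun z => this (mem_univ z))

lemma down_inj (hn : 2 ≤ n) {J : Finset (Finset (Fin n))}
    (hJ : IsMaxTubing (cycleGraph n) J) {x y : Fin n}
    (h : tubingDown J x = tubingDown J y) : x = y := by
  haveI : NeZero n := ⟨by omega⟩
  by_contra hxy
  set D : Finset (Fin n) := tubingDown J x with hD
  have hDJ : D ∈ J := (tubingDown_spec (by omega) hJ x).1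
  have hxD : x ∈ D := (tubingDown_spec (by omega) hJ x).2
  have hyD : y ∈ D := by
    rw [h]; exact (tubingDown_spec (by omega) hJ y).2
  by_cases Du : D = univ
  · -- x is a root; univ \ {x} is an addable tube
    set W : Finset (Fin n) := univ.filter (fun z => z ≠ x) with hWdef
    have hWiff : ∀ z, z ∈ W ↔ 1 ≤ (z - x).val ∧ (z - x).val < n := by
      intro z
      rw [hWdef, Finset.mem_filter]
      constructor
      · rintro ⟨-, hzx⟩
        exact ⟨by have := pos_ne_zero (m := x) hzx; omega, (z - x).isLt⟩
      · rintro ⟨h1, -⟩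
        refine ⟨mem_univ z, fun hz => ?_⟩
        rw [hz] at h1
        rw [pos_zero] at h1
        omega
    have hWtube : IsTube (cycleGraph n) W := arc_conn hn x (by omega) le_rfl W hWiff
    have hxW : x ∉ W := by
      intro hx
      have h1 := ((hWiff x).mp hx).1
      rw [pos_zero] at h1
      omega
    have hWJ : W ∉ J := by
      intro hWJ
      have hyW : y ∈ W := (hWiff y).mpr ⟨by have := pos_ne_zero (m := x) (fun hh => hxy hh.symm); omega, (y - x).isLt⟩
      have : tubingDown J y ⊆ W := tubingDown_subset hWJ hyW
      rw [← h] at this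
      exact hxW (this hxD)
    refine hWJ (insert_tube_mem hJ hWtube ?_)
    intro Z hZ
    by_cases hxZ : x ∈ Z
    · have : Z = univ := root_only (by omega) hJ (hD ▸ Du) hZ hxZ
      rw [this]
      exact Or.inl (subset_univ W)
    · exact Or.inr (Or.inl (fun z hz => Finset.mem_filter.mpr ⟨mem_univ z, fun hzx => hxZ (hzx ▸ hz)⟩))
  · -- D is a proper tube; cut it below the higher of x, y
    obtain ⟨m, -, hm⟩ := exists_top hJ.1 (univ_mem (by omega : 0 < n) hJ)
    have hmD : m ∉ D := fun hmD => Du (root_only (by omega) hJ hm hDJ hmD)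
    have hmZ : ∀ z ∈ D, z ≠ m := fun z hz hzm => hmD (hzm ▸ hz)
    have hDtube : IsTube (cycleGraph n) D := hJ.1.1 D hDJ
    set P : Finset ℕ := D.image (fun z => (z - m).val) with hP
    have hPne : P.Nonempty := ⟨(x - m).val, Finset.mem_image_of_mem _ hxD⟩
    set p : ℕ := P.min' hPne with hpdef
    obtain ⟨zp, hzpD, hzp⟩ := Finset.mem_image.mp (P.min'_mem hPne)
    have hp_le : ∀ z ∈ D, p ≤ (z - m).val := fun z hz =>
      P.min'_le _ (Finset.mem_image_of_mem _ hz)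
    have hp1 : 1 ≤ p := by
      have := pos_ne_zero (hmZ zp hzpD)
      omega
    have main : ∀ u v : Fin n, u ∈ D → v ∈ D → tubingDown J u = D → tubingDown J v = D →
        (u - m).val < (v - m).val → False := by
      intro u v huD hvD hdu hdv huv
      set ty : ℕ := (v - m).val with hty
      set W : Finset (Fin n) := univ.filter (fun z => p ≤ (z - m).val ∧ (z - m).val < ty)
        with hWdef
      have hWiff : ∀ z, z ∈ W ↔ p ≤ (z - m).val ∧ (z - m).val < ty := by
        intro z; rw [hWdef, Finset.mem_filter]; simp
      have hWtube : IsTube (cycleGraph n) W :=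
        arc_conn hn m (by have := hp_le u huD; omega) (by have := (v - m).isLt; omega) W hWiff
      have hWD : W ⊆ D := by
        intro z hz
        obtain ⟨h1, h2⟩ := (hWiff z).mp hz
        obtain ⟨d, hdD, hd⟩ := tube_convex hDtube m hmZ hzpD hvD
          (k := (z - m).val) (by omega) (by omega)
        rwa [← pos_inj hd]
      have huW : u ∈ W := (hWiff u).mpr ⟨hp_le u huD, huv⟩
      have hvW : v ∉ W := fun hv => by
        have := ((hWiff v).mp hv).2; omega
      have hWJ : W ∉ J := by
        intro hWJ
        have : tubingDown J u ⊆ W := tubingDown_subset hWJ huW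
        rw [hdu] at this
        exact hvW (this hvD)
      refine hWJ (insert_tube_mem hJ hWtube ?_)
      intro Z hZJ
      rcases hJ.1.2 D hDJ Z hZJ with hDZ | hZD | hnd
      · exact Or.inl (fun z hz => hDZ (hWD hz))
      · by_cases hvZ : v ∈ Z
        · have hZD' : Z = D := Finset.Subset.antisymm hZD (hdv ▸ tubingDown_subset hZJ hvZ)
          exact Or.inl (hZD' ▸ hWD)
        · by_cases hbig : ∃ z₀ ∈ Z, ty ≤ (z₀ - m).val
          · obtain ⟨z₀, hz₀Z, hz₀⟩ := hbig
            refine Or.inr (Or.inr ?_)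
            intro htube
            have hmWZ : ∀ w ∈ W ∪ Z, w ≠ m := by
              intro w hw
              rcases Finset.mem_union.mp hw with hw | hw
              · intro hwm
                have := ((hWiff w).mp hw).1
                rw [hwm, pos_zero] at this
                omega
              · exact hmZ w (hZD hw)
            have hz₀ne : (z₀ - m).val ≠ ty := by
              intro hEq
              exact hvZ ((pos_inj (hEq.trans hty.symm ▸ rfl : (z₀ - m).val = (v - m).val)) ▸ hz₀Z)
            obtain ⟨w, hwWZ, hwval⟩ := tube_convex htube m hmWZ
              (Finset.mem_union_left _ huW) (Finset.mem_union_right _ hz₀Z)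
              (k := ty) (by omega) (by omega)
            have : w = v := pos_inj (by rw [hwval])
            subst this
            rcases Finset.mem_union.mp hwWZ with hw | hw
            · exact hvW hw
            · exact hvZ hw
          · push_neg at hbig
            refine Or.inr (Or.inl ?_)
            intro z hz
            exact (hWiff z).mpr ⟨hp_le z (hZD hz), hbig z hz⟩
      · refine Or.inr (Or.inr ?_)
        intro htube
        have hun : (W ∪ Z) ∪ D = D ∪ Z := by
          ext w
          simp only [Finset.mem_union]
          constructor
          · rintro ((hw | hw) | hw)
            · exact Or.inl (hWD hw)
            · exact Or.inr hw
            · exact Or.inl hw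
          · rintro (hw | hw)
            · exact Or.inr hw
            · exact Or.inl (Or.inr hw)
        have := tube_union htube hDtube (Or.inl ⟨u, Finset.mem_union_left _ huW, huD⟩)
        rw [hun] at this
        exact hnd this
    rcases Nat.lt_trichotomy ((x - m).val) ((y - m).val) with hlt | heq | hgt
    · exact main x y hxD hyD hD.symm h.symm hlt
    · exact hxy (pos_inj heq)
    · exact main y x hyD hxD h.symm hD.symm hgt

lemma treeLE_antisymm (hn : 2 ≤ n) {J : Finset (Finset (Fin n))}
    (hJ : IsMaxTubing (cycleGraph n) J) {x y : Fin n}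
    (h1 : treeLE J x y) (h2 : treeLE J y x) : x = y :=
  down_inj hn hJ (tubingDown_eq_of_le_le h1 h2)

end PartE
section PartF
open Finset

variable {n : ℕ}

lemma treeLE_mem {T : Finset (Finset (Fin n))} {x y : Fin n} :
    treeLE T x y ↔ x ∈ tubingDown T y := Iff.rfl

lemma inv_transfer {J K : Finset (Finset (Fin n))} (hinv : invSet J = invSet K)
    {i j : Fin n} (hij : i < j) : treeLE J j i ↔ treeLE K j i := by
  have h := Set.ext_iff.mp hinv (i, j)
  simp only [invSet, Set.mem_setOf_eq] at h
  exact ⟨fun hh => (h.mp ⟨hij, hh⟩).2, fun hh => (h.mpr ⟨hij, hh⟩).2⟩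

lemma down_ne_univ (hn : 2 ≤ n) {J : Finset (Finset (Fin n))}
    (hJ : IsMaxTubing (cycleGraph n) J) {m b : Fin n}
    (hmJ : tubingDown J m = (univ : Finset (Fin n))) (hbm : b ≠ m) :
    m ∉ tubingDown J b := by
  intro hm
  have := root_only (by omega) hJ hmJ (tubingDown_spec (by omega) hJ b).1 hm
  exact hbm (down_inj hn hJ (this.trans hmJ.symm))

lemma main_step (hn : 2 ≤ n) {J K : Finset (Finset (Fin n))}
    (hJ : IsMaxTubing (cycleGraph n) J) (hK : IsMaxTubing (cycleGraph n) K)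
    (hinv : invSet J = invSet K) {m : Fin n}
    (hmJ : tubingDown J m = (univ : Finset (Fin n)))
    (hmK : tubingDown K m = (univ : Finset (Fin n)))
    {a b : Fin n} (ham : a ≠ m) (hbm : b ≠ m) (hab : a < b)
    (IH : ∀ z : Fin n,
      ((z - m).val - (b - m).val) + ((b - m).val - (z - m).val) <
        ((a - m).val - (b - m).val) + ((b - m).val - (a - m).val) →
      (treeLE J z b ↔ treeLE K z b))
    (hJab : treeLE J a b) : treeLE K a b := by
  haveI : NeZero n := ⟨by omega⟩
  have hn0 : 0 < n := by omega
  by_contra hKab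
  have hAK : tubingDown K a ∈ K := (tubingDown_spec hn0 hK a).1
  have haA : a ∈ tubingDown K a := (tubingDown_spec hn0 hK a).2
  have hBK : tubingDown K b ∈ K := (tubingDown_spec hn0 hK b).1
  have hbB : b ∈ tubingDown K b := (tubingDown_spec hn0 hK b).2
  have haB : a ∉ tubingDown K b := hKab
  have hbA : b ∉ tubingDown K a := by
    intro hbA
    have h1 : treeLE K b a := hbA
    have h2 : treeLE J b a := (inv_transfer hinv hab).mpr h1
    exact absurd (treeLE_antisymm hn hJ hJab h2) (Fin.ne_of_lt hab)
  have hnab : ¬ IsTube (cycleGraph n) (tubingDown K a ∪ tubingDown K b) := by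
    rcases hK.1.2 _ hAK _ hBK with h | h | h
    · exact absurd (h haA) haB
    · exact absurd (h hbB) hbA
    · exact h
  have hmB : m ∉ tubingDown K b := down_ne_univ hn hK hmK hbm
  have hmZB : ∀ z ∈ tubingDown K b, z ≠ m := fun z hz hzm => hmB (hzm ▸ hz)
  have hmDb : m ∉ tubingDown J b := down_ne_univ hn hJ hmJ hbm
  have hmZDb : ∀ z ∈ tubingDown J b, z ≠ m := fun z hz hzm => hmDb (hzm ▸ hz)
  have haDb : a ∈ tubingDown J b := hJab
  have hbDb : b ∈ tubingDown J b := (tubingDown_spec hn0 hJ b).2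
  have hDbJ : tubingDown J b ∈ J := (tubingDown_spec hn0 hJ b).1
  have hDbtube : IsTube (cycleGraph n) (tubingDown J b) := hJ.1.1 _ hDbJ
  have hBtube : IsTube (cycleGraph n) (tubingDown K b) := hK.1.1 _ hBK
  have hAtube : IsTube (cycleGraph n) (tubingDown K a) := hK.1.1 _ hAK
  have hab' : a ≠ b := Fin.ne_of_lt hab
  have hsane : (a - m).val ≠ (b - m).val := fun h => hab' (pos_inj h)
  have hbn := (b - m).isLt
  have han := (a - m).isLt
  rcases Nat.lt_or_ge ((a - m).val) ((b - m).val) with hlt | hge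
  · by_cases hex : ∃ z, (a - m).val < (z - m).val ∧ (z - m).val < (b - m).val ∧
        z ∉ tubingDown K b
    · obtain ⟨z, h1, h2, h3⟩ := hex
      have hzDb : z ∈ tubingDown J b := by
        obtain ⟨d, hd, hdv⟩ := tube_convex hDbtube m hmZDb haDb hbDb
          (k := (z - m).val) (by omega) (by omega)
        exact pos_inj hdv ▸ hd
      have : treeLE K z b := (IH z (by omega)).mp hzDb
      exact h3 this
    · push_neg at hex
      set z₁ : Fin n := a + 1 with hz₁
      have hz₁m : z₁ - m = (a - m) + 1 := by rw [hz₁, add_sub_right_comm]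
      have hz₁v : (z₁ - m).val = (a - m).val + 1 := by
        rw [hz₁m, fin_val_add_one (by omega)]
      have hz₁B : z₁ ∈ tubingDown K b := by
        by_cases he : (a - m).val + 1 = (b - m).val
        · have : z₁ = b := pos_inj (m := m) (by omega)
          exact this ▸ hbB
        · exact hex z₁ (by omega) (by omega)
      exact hnab (tube_union hAtube hBtube
        (Or.inr ⟨a, haA, z₁, hz₁B, cycle_adj_succ hn a⟩))
  · have hgt : (b - m).val < (a - m).val := by omega
    by_cases hex : ∃ z, (b - m).val < (z - m).val ∧ (z - m).val < (a - m).val ∧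
        z ∉ tubingDown K b
    · obtain ⟨z, h1, h2, h3⟩ := hex
      have hzDb : z ∈ tubingDown J b := by
        obtain ⟨d, hd, hdv⟩ := tube_convex hDbtube m hmZDb hbDb haDb
          (k := (z - m).val) (by omega) (by omega)
        exact pos_inj hdv ▸ hd
      have : treeLE K z b := (IH z (by omega)).mp hzDb
      exact h3 this
    · push_neg at hex
      have hsa1 : 1 ≤ (a - m).val := by omega
      set w : Fin n := a - 1 with hw
      have hwm : w - m = (a - m) - 1 := by rw [hw, sub_sub, add_comm, ← sub_sub]
      have hwv : (w - m).val = (a - m).val - 1 := by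
        rw [hwm, fin_sub_one_eq hsa1]
      have hwB : w ∈ tubingDown K b := by
        by_cases he : (a - m).val - 1 = (b - m).val
        · have : w = b := pos_inj (m := m) (by omega)
          exact this ▸ hbB
        · exact hex w (by omega) (by omega)
      have hwa : w + 1 = a := sub_add_cancel a 1
      have hadj : (cycleGraph n).Adj a w := by
        have := cycle_adj_succ hn w
        rw [hwa] at this
        exact this.symm
      exact hnab (tube_union hAtube hBtube (Or.inr ⟨a, haA, w, hwB, hadj⟩))

end PartF
section PartG
open Finset

variable {n : ℕ}

lemma treeLE_ext (hn : 2 ≤ n) {J K : Finset (Finset (Fin n))}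
    (hJ : IsMaxTubing (cycleGraph n) J) (hK : IsMaxTubing (cycleGraph n) K)
    (hinv : invSet J = invSet K) (x y : Fin n) : treeLE J x y ↔ treeLE K x y := by
  haveI : NeZero n := ⟨by omega⟩
  have hn0 : 0 < n := by omega
  obtain ⟨mJ, -, hmJ⟩ := exists_top hJ.1 (univ_mem hn0 hJ)
  obtain ⟨mK, -, hmK⟩ := exists_top hK.1 (univ_mem hn0 hK)
  have hroot : mJ = mK := by
    rcases lt_trichotomy mJ mK with hlt | heq | hgt
    · have h1 : treeLE J mK mJ := by
        rw [treeLE_mem, hmJ]; exact mem_univ _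
      have h2 : treeLE K mK mJ := (inv_transfer hinv hlt).mp h1
      have h3 : treeLE K mJ mK := by
        rw [treeLE_mem, hmK]; exact mem_univ _
      exact treeLE_antisymm hn hK h3 h2
    · exact heq
    · have h1 : treeLE K mJ mK := by
        rw [treeLE_mem, hmK]; exact mem_univ _
      have h2 : treeLE J mJ mK := (inv_transfer hinv hgt).mpr h1
      have h3 : treeLE J mK mJ := by
        rw [treeLE_mem, hmJ]; exact mem_univ _
      exact treeLE_antisymm hn hJ h2 h3
  rw [hroot] at hmJ
  set m := mK with hmdef
  suffices H : ∀ d : ℕ, ∀ x y : Fin n,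
      ((x - m).val - (y - m).val) + ((y - m).val - (x - m).val) = d →
      (treeLE J x y ↔ treeLE K x y) from H _ x y rfl
  intro d
  induction d using Nat.strong_induction_on with
  | _ d IH =>
  intro x y hd
  by_cases hxy : x = y
  · subst hxy
    exact iff_of_true (treeLE_refl J x) (treeLE_refl K x)
  by_cases hym : y = m
  · subst hym
    refine iff_of_true ?_ ?_
    · rw [treeLE_mem, hmJ]; exact mem_univ _
    · rw [treeLE_mem, hmK]; exact mem_univ _
  by_cases hxm : x = m
  · subst hxm
    refine iff_of_false ?_ ?_
    · intro h
      exact down_ne_univ hn hJ hmJ hym h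
    · intro h
      exact down_ne_univ hn hK hmK hym h
  rcases lt_trichotomy x y with hlt | heq | hgt
  · constructor
    · exact main_step hn hJ hK hinv hmJ hmK hxm hym hlt
        (fun z hz => IH _ (hd ▸ hz) z y rfl)
    · exact main_step hn hK hJ hinv.symm hmK hmJ hxm hym hlt
        (fun z hz => (IH _ (hd ▸ hz) z y rfl).symm)
  · exact absurd heq hxy
  · exact inv_transfer hinv hgt

end PartG

/-- Maximal tubings of the cycle graph are equal iff their inversion sets coincide. -/
theorem mtub_cycle_inv_eq (n : ℕ) (J K : Finset (Finset (Fin n)))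
    (hJ : IsMaxTubing (cycleGraph n) J) (hK : IsMaxTubing (cycleGraph n) K) :
    invSet J = invSet K ↔ J = K := by
  constructor
  · intro hinv
    rcases Nat.lt_or_ge n 1 with hn0 | hn1
    · -- n = 0 : both tubings are empty
      have hempty : ∀ T : Finset (Finset (Fin n)), IsMaxTubing (cycleGraph n) T → T = ∅ := by
        intro T hT
        apply Finset.eq_empty_of_forall_notMem
        intro X hX
        obtain ⟨v, -⟩ := (hT.1.1 X hX).1
        exact absurd v.isLt (by omega)
      rw [hempty J hJ, hempty K hK]
    rcases Nat.lt_or_ge n 2 with hn1' | hn2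
    · -- n = 1
      have hn : n = 1 := by omega
      subst hn
      have hsub : J ⊆ K := by
        intro X hX
        have hXuniv : X = univ := by
          obtain ⟨w, hw⟩ := (hJ.1.1 X hX).1
          apply Finset.eq_univ_of_forall
          intro z
          have : z = w := by
            apply Fin.ext
            have := z.isLt
            have := w.isLt
            omega
          rwa [this]
        rw [hXuniv]
        exact univ_mem (by omega) hK
      exact (hJ.2 K hK.1 hsub).symm
    · -- main case
      have hsub : J ⊆ K := by
        intro X hX
        obtain ⟨x, -, hx⟩ := exists_top hJ.1 hX
        have hdown : tubingDown K x = tubingDown J x := by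
          ext z
          exact (treeLE_ext hn2 hJ hK hinv z x).symm
        rw [← hx, ← hdown]
        exact (tubingDown_spec (by omega) hK x).1
      exact (hJ.2 K hK.1 hsub).symm
  · rintro rfl
    rfl
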